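/- Suppose φ satisfies the stated assumption and in addition: φ is twice continuously differentiable on (0,∞), φ'' is increasing on (0,∞) with φ''(t) ≤ 0 for every t > 0, φ''(t) → −∞ as t → 0⁺, and φ''(t) → 0 as t → +∞. Then there exists a constant θ₂ > 0 (depending only on A, b, β, φ and the vectors G_i, but not on the minimizer) such that for every local minimizer x* of F with q = 2 and every i ∈ J, either G_iᵀ x* = 0 or |G_iᵀ x*| ≥ θ₂. -/

import Mathlib

set_option maxHeartbeats 1000000

/-- The dot product `gᵀ x` of two vectors in `ℝ^N`. -/
noncomputable def dotp {N : ℕ} (g x : Fin N → ℝ) : ℝ := ∑ l, g l * x l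

/-- The Euclidean norm `‖x‖₂` on `ℝ^N`. -/
noncomputable def norm2 {N : ℕ} (x : Fin N → ℝ) : ℝ := Real.sqrt (∑ l, (x l) ^ 2)

/-- Assumptions on the potential function `φ` (with derivative `φ'` on `(0,∞)`):
continuous, concave and coercive on `[0,∞)` with `φ(0) = 0`; continuously
differentiable on `(0,∞)` with positive derivative there, `φ'(0⁺) = +∞`, and
`φ'` Lipschitz on every `[α,∞)` with `α > 0`. -/
structure PhiAssumption (φ φ' : ℝ → ℝ) : Prop where
  nonneg : ∀ t : ℝ, 0 ≤ t → 0 ≤ φ t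
  zero : φ 0 = 0
  cont : ContinuousOn φ (Set.Ici 0)
  concave : ConcaveOn ℝ (Set.Ici 0) φ
  coercive : Filter.Tendsto φ Filter.atTop Filter.atTop
  hasDeriv : ∀ t : ℝ, 0 < t → HasDerivAt φ (φ' t) t
  derivCont : ContinuousOn φ' (Set.Ioi 0)
  derivPos : ∀ t : ℝ, 0 < t → 0 < φ' t
  derivAtZero : Filter.Tendsto φ' (nhdsWithin 0 (Set.Ioi 0)) Filter.atTop
  derivLip : ∀ α : ℝ, 0 < α → ∃ L : ℝ, ∀ s : ℝ, α ≤ s → ∀ t : ℝ, α ≤ t →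
    |φ' s - φ' t| ≤ L * |s - t|


/-- The objective function with quadratic fidelity (`q = 2`):
`F(x) = Σ_{i∈J} φ(|G_iᵀ x|) + (β/2) ‖Ax − b‖₂²`. -/
noncomputable def objF2 {M N : ℕ} {ι : Type} [Fintype ι] (φ : ℝ → ℝ)
    (A : Matrix (Fin M) (Fin N) ℝ) (b : Fin M → ℝ) (G : ι → Fin N → ℝ)
    (β : ℝ) (x : Fin N → ℝ) : ℝ :=
  (∑ i : ι, φ |dotp (G i) x|) + (β / 2) * ∑ l, (A.mulVec x l - b l) ^ 2

/- ### Auxiliary lemmas -/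

lemma dotp_add_smul {N : ℕ} (g x u : Fin N → ℝ) (t : ℝ) :
    dotp g (x + t • u) = dotp g x + t * dotp g u := by
  simp only [dotp, Pi.add_apply, Pi.smul_apply, smul_eq_mul, Finset.mul_sum,
    ← Finset.sum_add_distrib]
  exact Finset.sum_congr rfl fun l _ => by ring

lemma norm2_nonneg {N : ℕ} (u : Fin N → ℝ) : 0 ≤ norm2 u := Real.sqrt_nonneg _

lemma norm2_smul {N : ℕ} (t : ℝ) (u : Fin N → ℝ) : norm2 (t • u) = |t| * norm2 u := by
  unfold norm2
  rw [← Real.sqrt_sq_eq_abs, ← Real.sqrt_mul (sq_nonneg t), Finset.mul_sum]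
  congr 1
  exact Finset.sum_congr rfl fun l _ => by simp [smul_eq_mul]; ring

/-- The embedding of `Fin N → ℝ` into the Euclidean space. -/
noncomputable def toE {N : ℕ} (x : Fin N → ℝ) : EuclideanSpace ℝ (Fin N) :=
  (WithLp.equiv 2 (Fin N → ℝ)).symm x

/-- The auxiliary direction: the component of `G i` orthogonal to the span of
`{G j : j ∈ S}`. -/
noncomputable def uvec {N : ℕ} {ι : Type} (G : ι → Fin N → ℝ) (S : Finset ι) (i : ι) :
    Fin N → ℝ :=
  WithLp.equiv 2 (Fin N → ℝ)
    (toE (G i) -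
      (Submodule.orthogonalProjectionOnto (Submodule.span ℝ ((fun j => toE (G j)) '' S)) (toE (G i)) :
        EuclideanSpace ℝ (Fin N)))

lemma dotp_eq_inner {N : ℕ} (g x : Fin N → ℝ) :
    dotp g x = (inner ℝ (toE g) (toE x) : ℝ) := by
  rw [PiLp.inner_apply]
  simp [dotp, toE, RCLike.inner_apply, mul_comm]

lemma toE_uvec {N : ℕ} {ι : Type} (G : ι → Fin N → ℝ) (S : Finset ι) (i : ι) :
    toE (uvec G S i) = toE (G i) -
      (Submodule.orthogonalProjectionOnto (Submodule.span ℝ ((fun j => toE (G j)) '' S)) (toE (G i)) :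
        EuclideanSpace ℝ (Fin N)) := rfl

lemma uvec_orth {N : ℕ} {ι : Type} (G : ι → Fin N → ℝ) (S : Finset ι) (i : ι)
    (j : ι) (hj : j ∈ S) : dotp (G j) (uvec G S i) = 0 := by
  set V : Submodule ℝ (EuclideanSpace ℝ (Fin N)) :=
    Submodule.span ℝ ((fun j => toE (G j)) '' S) with hV
  have h1 : toE (G j) ∈ V :=
    Submodule.subset_span (Set.mem_image_of_mem _ (by simpa using hj))
  have h2 : toE (uvec G S i) ∈ Vᗮ := by
    rw [toE_uvec]
    exact Submodule.sub_starProjection_mem_orthogonal _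
  have h3 : (inner ℝ (toE (G j)) (toE (uvec G S i)) : ℝ) = 0 :=
    Submodule.inner_right_of_mem_orthogonal h1 h2
  rw [dotp_eq_inner]
  exact h3

lemma uvec_self {N : ℕ} {ι : Type} (G : ι → Fin N → ℝ) (S : Finset ι) (i : ι) :
    dotp (G i) (uvec G S i) = ‖toE (uvec G S i)‖ ^ 2 := by
  set V := Submodule.span ℝ ((fun j => toE (G j)) '' S)
  have hmem : toE (uvec G S i) ∈ Vᗮ := by
    rw [toE_uvec]; exact Submodule.sub_starProjection_mem_orthogonal _
  rw [dotp_eq_inner, ← real_inner_self_eq_norm_sq]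
  have : toE (G i) = toE (uvec G S i) +
      (Submodule.orthogonalProjectionOnto V (toE (G i)) : EuclideanSpace ℝ (Fin N)) := by
    rw [toE_uvec]; abel
  rw [this, inner_add_left]
  have h0 : (inner ℝ ((Submodule.orthogonalProjectionOnto V (toE (G i)) : EuclideanSpace ℝ (Fin N)))
      (toE (uvec G S i)) : ℝ) = 0 :=
    Submodule.inner_right_of_mem_orthogonal (SetLike.coe_mem _) hmem
  rw [h0, add_zero]

lemma uvec_nonzero {N : ℕ} {ι : Type} (G : ι → Fin N → ℝ) (S : Finset ι) (i : ι)
    (xs : Fin N → ℝ) (hS : ∀ j ∈ S, dotp (G j) xs = 0) (hi : dotp (G i) xs ≠ 0) :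
    0 < dotp (G i) (uvec G S i) := by
  set V := Submodule.span ℝ ((fun j => toE (G j)) '' S)
  rcases eq_or_ne (toE (uvec G S i)) 0 with h0 | h0
  · exfalso
    have hGi : toE (G i) ∈ V := by
      have h1 : toE (G i) - (Submodule.orthogonalProjectionOnto V (toE (G i)) :
          EuclideanSpace ℝ (Fin N)) = 0 := h0
      have h2 := sub_eq_zero.mp h1
      rw [h2]; exact SetLike.coe_mem _
    have hxs : ∀ v ∈ V, (inner ℝ v (toE xs) : ℝ) = 0 := by
      intro v hv
      induction hv using Submodule.span_induction with
      | mem y hy =>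
        obtain ⟨j, hj, rfl⟩ := hy
        rw [← dotp_eq_inner]; exact hS j (by simpa using hj)
      | zero => simp
      | add y z _ _ hy hz => rw [inner_add_left, hy, hz, add_zero]
      | smul a y _ hy => rw [inner_smul_left, hy]; simp
    exact hi (by rw [dotp_eq_inner]; exact hxs _ hGi)
  · have h := uvec_self G S i
    rw [h]
    have hne : ‖toE (uvec G S i)‖ ≠ 0 := fun hc => h0 (norm_eq_zero.mp hc)
    positivity

lemma conc_pair {φ φ' : ℝ → ℝ} (hφ : PhiAssumption φ φ') (a t : ℝ)
    (ht : |t| ≤ a) : φ (a + t) + φ (a - t) ≤ 2 * φ a := by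
  have h1 : a + t ∈ Set.Ici (0:ℝ) := by
    have := abs_le.mp ht; simp only [Set.mem_Ici]; linarith [this.1]
  have h2 : a - t ∈ Set.Ici (0:ℝ) := by
    have := abs_le.mp ht; simp only [Set.mem_Ici]; linarith [this.2]
  have := hφ.concave.2 h1 h2 (by norm_num : (0:ℝ) ≤ 1/2) (by norm_num : (0:ℝ) ≤ 1/2)
    (by norm_num)
  simp only [smul_eq_mul] at this
  have e : (1/2 : ℝ) * (a + t) + (1/2) * (a - t) = a := by ring
  rw [e] at this
  linarith

lemma abs_pair (φ : ℝ → ℝ) (c e : ℝ) (he : |e| ≤ |c|) :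
    φ |c + e| + φ |c - e| = φ (|c| + |e|) + φ (|c| - |e|) := by
  rcases le_or_gt 0 c with hc | hc <;> rcases le_or_gt 0 e with heo | heo
  · rw [abs_of_nonneg hc, abs_of_nonneg heo] at *
    rw [abs_of_nonneg (by linarith), abs_of_nonneg (by linarith)]
  · rw [abs_of_nonneg hc, abs_of_nonpos heo.le] at *
    rw [abs_of_nonneg (by linarith), abs_of_nonneg (by linarith)]
    rw [add_comm (φ (c + e))]
    congr 1 <;> congr 1 <;> ring
  · rw [abs_of_nonpos hc.le, abs_of_nonneg heo] at *
    rw [abs_of_nonpos (by linarith), abs_of_nonpos (by linarith)]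
    rw [add_comm (φ (-(c+e)))]
    congr 1 <;> congr 1 <;> ring
  · rw [abs_of_nonpos hc.le, abs_of_nonpos heo.le] at *
    rw [abs_of_nonpos (by linarith), abs_of_nonpos (by linarith)]
    congr 1 <;> congr 1 <;> ring

/-- Second-difference bound: for `0 < h < a`,
`φ(a+h) + φ(a−h) − 2φ(a) ≤ φ''(a+h) h²`. -/
lemma second_diff {φ φ' φ'' : ℝ → ℝ} (hφ : PhiAssumption φ φ')
    (hφ''deriv : ∀ t : ℝ, 0 < t → HasDerivAt φ' (φ'' t) t)
    (hφ''mono : ∀ s t : ℝ, 0 < s → s ≤ t → φ'' s ≤ φ'' t)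
    (a h : ℝ) (h0 : 0 < h) (hha : h < a) :
    φ (a + h) + φ (a - h) - 2 * φ a ≤ φ'' (a + h) * h ^ 2 := by
  set g : ℝ → ℝ := fun r => φ'' (a + h) * r ^ 2 - (φ (a + r) + φ (a - r) - 2 * φ a) with hg
  have ha0 : 0 < a := lt_trans h0 hha
  have hgd : ∀ r ∈ Set.Icc (0:ℝ) h,
      HasDerivAt g (2 * φ'' (a + h) * r - (φ' (a + r) - φ' (a - r))) r := by
    intro r hr
    have hp : 0 < a + r := by have := hr.1; linarith
    have hm : 0 < a - r := by have := hr.2; linarith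
    have d1 : HasDerivAt (fun r : ℝ => φ (a + r)) (φ' (a + r)) r := by
      have := (hφ.hasDeriv (a + r) hp).comp r ((hasDerivAt_id r).const_add a)
      simpa [Function.comp_def] using this
    have d2 : HasDerivAt (fun r : ℝ => φ (a - r)) (-φ' (a - r)) r := by
      have := (hφ.hasDeriv (a - r) hm).comp r ((hasDerivAt_id r).const_sub a)
      simpa [Function.comp_def] using this
    have d3 : HasDerivAt (fun r : ℝ => φ'' (a + h) * r ^ 2) (2 * φ'' (a + h) * r) r := by
      have := ((hasDerivAt_pow 2 r).const_mul (φ'' (a + h)))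
      simpa [mul_comm, mul_assoc, mul_left_comm] using this
    have := d3.sub ((d1.add d2).sub (hasDerivAt_const r (2 * φ a)))
    exact this.congr_deriv (by ring)
  have hmono : MonotoneOn g (Set.Icc 0 h) := by
    apply monotoneOn_of_deriv_nonneg (convex_Icc 0 h)
    · intro r hr
      exact (hgd r hr).continuousAt.continuousWithinAt
    · intro r hr
      rw [interior_Icc] at hr
      exact ((hgd r (Set.mem_Icc_of_Ioo hr)).differentiableAt).differentiableWithinAt
    · intro r hr
      rw [interior_Icc] at hr
      rw [(hgd r (Set.mem_Icc_of_Ioo hr)).deriv]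
      have hr0 : 0 < r := hr.1
      have hrh : r < h := hr.2
      have hab : a - r < a + r := by linarith
      have hcont : ContinuousOn φ' (Set.Icc (a - r) (a + r)) := by
        apply hφ.derivCont.mono
        intro t ht
        have := ht.1
        simp only [Set.mem_Ioi]; linarith
      have hder : ∀ x ∈ Set.Ioo (a - r) (a + r), HasDerivAt φ' (φ'' x) x := by
        intro x hx
        exact hφ''deriv x (by have := hx.1; linarith)
      obtain ⟨ξ, hξ, hslope⟩ := exists_hasDerivAt_eq_slope φ' φ'' hab hcont hder
      have hξ0 : 0 < ξ := by have := hξ.1; linarith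
      have hξle : ξ ≤ a + h := by have := hξ.2; linarith
      have hle : φ'' ξ ≤ φ'' (a + h) := hφ''mono ξ (a + h) hξ0 hξle
      have heq : φ' (a + r) - φ' (a - r) = φ'' ξ * (2 * r) := by
        rw [hslope, show a + r - (a - r) = 2 * r by ring]
        field_simp
      rw [heq]
      nlinarith
  have key := hmono (Set.left_mem_Icc.mpr h0.le) (Set.right_mem_Icc.mpr h0.le) h0.le
  have hg0 : g 0 = 0 := by simp [hg]; ring
  rw [hg0] at key
  simp only [hg] at key
  linarith

/-- lower bound theory for the `ℓ₂`-fidelity model. Under the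
assumptions on `φ` together with the second-order assumptions on `φ''`, there
is a constant `θ₂ > 0`, independent of the minimizer, such that every local
minimizer `x*` of `F` (with `q = 2`) satisfies, for every `i ∈ J`, either
`G_iᵀ x* = 0` or `|G_iᵀ x*| ≥ θ₂`. -/
theorem lower_bound_l2_fidelity {M N : ℕ} (hM : 0 < M) (hN : 0 < N)
    {ι : Type} [Fintype ι]
    (A : Matrix (Fin M) (Fin N) ℝ) (b : Fin M → ℝ) (G : ι → Fin N → ℝ)
    (β : ℝ) (hβ : 0 < β)
    (φ φ' φ'' : ℝ → ℝ) (hφ : PhiAssumption φ φ')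
    (hφ''deriv : ∀ t : ℝ, 0 < t → HasDerivAt φ' (φ'' t) t)
    (hφ''cont : ContinuousOn φ'' (Set.Ioi 0))
    (hφ''mono : ∀ s t : ℝ, 0 < s → s ≤ t → φ'' s ≤ φ'' t)
    (hφ''nonpos : ∀ t : ℝ, 0 < t → φ'' t ≤ 0)
    (hφ''atZero : Filter.Tendsto φ'' (nhdsWithin 0 (Set.Ioi 0)) Filter.atBot)
    (hφ''atTop : Filter.Tendsto φ'' Filter.atTop (nhds 0)) :
    ∃ θ₂ > (0 : ℝ), ∀ xs : Fin N → ℝ,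
      (∃ ε > (0 : ℝ), ∀ x : Fin N → ℝ, norm2 (x - xs) < ε →
        objF2 φ A b G β xs ≤ objF2 φ A b G β x) →
      ∀ i : ι, dotp (G i) xs = 0 ∨ θ₂ ≤ |dotp (G i) xs| := by
  classical
  -- the uniform constant
  set Cf : Finset ι × ι → ℝ := fun p =>
    β * (∑ l, (A.mulVec (uvec G p.1 p.2) l) ^ 2) / (dotp (G p.2) (uvec G p.1 p.2)) ^ 2
    with hCf
  set Cm : ℝ := (((Finset.univ : Finset (Finset ι × ι)).sup fun p => ⌈Cf p⌉₊ : ℕ) : ℝ)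
    with hCm
  have hCmge : ∀ p : Finset ι × ι, Cf p ≤ Cm := by
    intro p
    calc Cf p ≤ (⌈Cf p⌉₊ : ℝ) := Nat.le_ceil _
      _ ≤ Cm := by
          rw [hCm]
          exact Nat.cast_le.mpr (Finset.le_sup (f := fun p => ⌈Cf p⌉₊) (Finset.mem_univ p))
  -- threshold δ from φ'' → −∞ at 0⁺
  have hev : ∀ᶠ t in nhdsWithin 0 (Set.Ioi 0), φ'' t < -(Cm + 1) :=
    hφ''atZero.eventually (Filter.eventually_lt_atBot _)
  rw [eventually_nhdsWithin_iff, Metric.eventually_nhds_iff] at hev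
  obtain ⟨δ, hδ0, hδ⟩ := hev
  refine ⟨δ / 2, by positivity, ?_⟩
  rintro xs ⟨ε, hε0, hmin⟩ i
  rcases eq_or_ne (dotp (G i) xs) 0 with h0 | h0
  · exact Or.inl h0
  right
  by_contra hlt
  push_neg at hlt
  -- setup
  set S : Finset ι := Finset.univ.filter (fun j => dotp (G j) xs = 0) with hSdef
  set u : Fin N → ℝ := uvec G S i with hu
  set c : ι → ℝ := fun j => dotp (G j) xs with hcdef
  set d : ι → ℝ := fun j => dotp (G j) u with hddef
  have hdi : 0 < d i := by
    rw [hddef, hu]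
    exact uvec_nonzero G S i xs (fun j hj => (Finset.mem_filter.mp hj).2) h0
  set K : ℝ := ∑ l, (A.mulVec u l) ^ 2 with hK
  have hK0 : 0 ≤ K := Finset.sum_nonneg fun l _ => sq_nonneg _
  -- choice of the step size s
  set T : Finset ι := Finset.univ.filter (fun j => c j ≠ 0) with hTdef
  have hiT : i ∈ T := Finset.mem_filter.mpr ⟨Finset.mem_univ i, h0⟩
  have hTne : T.Nonempty := ⟨i, hiT⟩
  set m : ℝ := T.inf' hTne (fun j => |c j| / (|d j| + 1)) with hm
  have hm0 : 0 < m := by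
    rw [hm, Finset.lt_inf'_iff]
    intro j hj
    have hcj : c j ≠ 0 := (Finset.mem_filter.mp hj).2
    have : 0 < |c j| := abs_pos.mpr hcj
    positivity
  set s : ℝ := min (min (ε / (norm2 u + 1)) m) (δ / (2 * (|d i| + 1))) with hs
  have hnu : 0 ≤ norm2 u := norm2_nonneg u
  have hs0 : 0 < s := by
    rw [hs]
    have h1 : 0 < ε / (norm2 u + 1) := by positivity
    have h2 : 0 < δ / (2 * (|d i| + 1)) := by positivity
    exact lt_min (lt_min h1 hm0) h2
  have hsj : ∀ j, c j ≠ 0 → s * |d j| < |c j| := by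
    intro j hcj
    have h1 : s ≤ |c j| / (|d j| + 1) := by
      refine le_trans (le_trans (min_le_left _ _) (min_le_right _ _)) ?_
      exact Finset.inf'_le _ (Finset.mem_filter.mpr ⟨Finset.mem_univ j, hcj⟩)
    have hcj0 : 0 < |c j| := abs_pos.mpr hcj
    have h2 : s * |d j| ≤ (|c j| / (|d j| + 1)) * |d j| :=
      mul_le_mul_of_nonneg_right h1 (abs_nonneg _)
    have h3 : (|c j| / (|d j| + 1)) * |d j| < |c j| := by
      rw [div_mul_eq_mul_div, div_lt_iff₀ (by positivity)]
      nlinarith [abs_nonneg (d j)]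
    linarith
  have hsnorm : s * norm2 u < ε := by
    have h1 : s ≤ ε / (norm2 u + 1) := le_trans (min_le_left _ _) (min_le_left _ _)
    have h2 : s * norm2 u ≤ (ε / (norm2 u + 1)) * norm2 u :=
      mul_le_mul_of_nonneg_right h1 hnu
    have h3 : (ε / (norm2 u + 1)) * norm2 u < ε := by
      rw [div_mul_eq_mul_div, div_lt_iff₀ (by positivity)]
      nlinarith
    linarith
  have hsdi : s * |d i| < δ / 2 := by
    have h1 : s ≤ δ / (2 * (|d i| + 1)) := min_le_right _ _
    have h2 : s * |d i| ≤ (δ / (2 * (|d i| + 1))) * |d i| :=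
      mul_le_mul_of_nonneg_right h1 (abs_nonneg _)
    have h3 : (δ / (2 * (|d i| + 1))) * |d i| < δ / 2 := by
      rw [div_mul_eq_mul_div, div_lt_iff₀ (by positivity)]
      nlinarith [abs_nonneg (d i)]
    linarith
  -- objective along the line xs + t • u
  have hobj : ∀ t : ℝ, objF2 φ A b G β (xs + t • u)
      = (∑ j, φ |c j + t * d j|) +
        (β / 2) * ∑ l, ((A.mulVec xs l - b l) + t * (A.mulVec u l)) ^ 2 := by
    intro t
    unfold objF2
    congr 1
    · exact Finset.sum_congr rfl fun j _ => by rw [dotp_add_smul]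
    · congr 1
      refine Finset.sum_congr rfl fun l _ => ?_
      rw [Matrix.mulVec_add, Matrix.mulVec_smul]
      simp only [Pi.add_apply, Pi.smul_apply, smul_eq_mul]
      ring
  have hobj0 : objF2 φ A b G β xs
      = (∑ j, φ |c j|) + (β / 2) * ∑ l, (A.mulVec xs l - b l) ^ 2 := rfl
  -- use minimality at xs ± s • u
  have hmemP : norm2 ((xs + s • u) - xs) < ε := by
    rw [add_sub_cancel_left, norm2_smul, abs_of_pos hs0]
    exact hsnorm
  have hmemM : norm2 ((xs + (-s) • u) - xs) < ε := by
    rw [add_sub_cancel_left, norm2_smul, abs_neg, abs_of_pos hs0]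
    exact hsnorm
  have Hplus := hmin _ hmemP
  have Hminus := hmin _ hmemM
  rw [hobj0, hobj s] at Hplus
  rw [hobj0, hobj (-s)] at Hminus
  -- quadratic part identity
  have hQ : (∑ l, ((A.mulVec xs l - b l) + s * (A.mulVec u l)) ^ 2) +
      (∑ l, ((A.mulVec xs l - b l) + (-s) * (A.mulVec u l)) ^ 2)
      = 2 * (∑ l, (A.mulVec xs l - b l) ^ 2) + 2 * s ^ 2 * K := by
    rw [hK, ← Finset.sum_add_distrib]
    rw [show (2 : ℝ) * (∑ l, (A.mulVec xs l - b l) ^ 2) + 2 * s ^ 2 *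
        (∑ l, (A.mulVec u l) ^ 2)
      = ∑ l, (2 * (A.mulVec xs l - b l) ^ 2 + 2 * s ^ 2 * (A.mulVec u l) ^ 2) by
        rw [Finset.sum_add_distrib, ← Finset.mul_sum, ← Finset.mul_sum]]
    exact Finset.sum_congr rfl fun l _ => by ring
  -- the central inequality : 0 ≤ ∑ T_j + β s² K
  have hsplit : (∑ j, (φ |c j + s * d j| + φ |c j - s * d j| - 2 * φ |c j|))
      = (∑ j, φ |c j + s * d j|) + (∑ j, φ |c j - s * d j|) - 2 * (∑ j, φ |c j|) := by
    rw [Finset.sum_sub_distrib, Finset.sum_add_distrib, Finset.mul_sum]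
  have hneg : ∀ j, |c j + (-s) * d j| = |c j - s * d j| := by
    intro j; congr 1; ring
  have Hsum : 0 ≤ (∑ j, (φ |c j + s * d j| + φ |c j - s * d j| - 2 * φ |c j|))
      + β * s ^ 2 * K := by
    have e : (∑ j, φ |c j + (-s) * d j|) = ∑ j, φ |c j - s * d j| :=
      Finset.sum_congr rfl fun j _ => by rw [hneg j]
    rw [e] at Hminus
    rw [hsplit]
    nlinarith [Hplus, Hminus, hQ]
  -- all terms except i are nonpositive
  have hTle : (∑ j, (φ |c j + s * d j| + φ |c j - s * d j| - 2 * φ |c j|))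
      ≤ φ |c i + s * d i| + φ |c i - s * d i| - 2 * φ |c i| := by
    have hstep : ∀ j ∈ Finset.univ (α := ι),
        φ |c j + s * d j| + φ |c j - s * d j| - 2 * φ |c j|
        ≤ if j = i then φ |c i + s * d i| + φ |c i - s * d i| - 2 * φ |c i| else 0 := by
      intro j _
      by_cases hji : j = i
      · subst hji; rw [if_pos rfl]
      · rw [if_neg hji]
        rcases eq_or_ne (c j) 0 with hcj | hcj
        · have hj : j ∈ S := Finset.mem_filter.mpr ⟨Finset.mem_univ j, hcj⟩
          have hdj : d j = 0 := by rw [hddef, hu]; exact uvec_orth G S i j hj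
          rw [hcj, hdj]
          simp [two_mul]
        · have he : |s * d j| ≤ |c j| := by
            rw [abs_mul, abs_of_pos hs0]
            exact (hsj j hcj).le
          have habs := abs_pair φ (c j) (s * d j) he
          have hconc := conc_pair hφ (|c j|) (|s * d j|)
            (by rw [abs_abs]; exact he)
          rw [show c j - s * d j = c j - s * d j by rfl] at habs
          have : φ |c j + s * d j| + φ |c j - s * d j| ≤ 2 * φ |c j| := by
            rw [habs]; exact hconc
          linarith
    calc (∑ j, (φ |c j + s * d j| + φ |c j - s * d j| - 2 * φ |c j|))
        ≤ ∑ j, (if j = i then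
            φ |c i + s * d i| + φ |c i - s * d i| - 2 * φ |c i| else 0) :=
          Finset.sum_le_sum hstep
      _ = φ |c i + s * d i| + φ |c i - s * d i| - 2 * φ |c i| := by
          rw [Finset.sum_ite_eq' Finset.univ i]
          simp
  have hTi : -(β * s ^ 2 * K)
      ≤ φ |c i + s * d i| + φ |c i - s * d i| - 2 * φ |c i| := by linarith
  -- rewrite T_i via a = |c i|, h = s|d i| and apply second_diff
  set a : ℝ := |c i| with ha
  set hh : ℝ := s * |d i| with hhdef
  have hh0 : 0 < hh := by
    rw [hhdef]
    exact mul_pos hs0 (abs_pos.mpr hdi.ne')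
  have hhlt : hh < a := by rw [hhdef, ha]; exact hsj i h0
  have heabs : |s * d i| ≤ |c i| := by
    rw [abs_mul, abs_of_pos hs0]; exact (hsj i h0).le
  have habs := abs_pair φ (c i) (s * d i) heabs
  have habs2 : |s * d i| = hh := by rw [hhdef, abs_mul, abs_of_pos hs0]
  have hTi2 : -(β * s ^ 2 * K) ≤ φ (a + hh) + φ (a - hh) - 2 * φ a := by
    rw [ha, ← habs2]
    calc -(β * s ^ 2 * K) ≤ φ |c i + s * d i| + φ |c i - s * d i| - 2 * φ |c i| := hTi
      _ = φ (|c i| + |s * d i|) + φ (|c i| - |s * d i|) - 2 * φ |c i| := by rw [habs]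
  have hsd := second_diff hφ hφ''deriv hφ''mono a hh hh0 hhlt
  have hkey : -(β * s ^ 2 * K) ≤ φ'' (a + hh) * hh ^ 2 := le_trans hTi2 hsd
  -- derive the lower bound on φ''(a + hh)
  have hh2 : hh ^ 2 = s ^ 2 * (d i) ^ 2 := by
    rw [hhdef, mul_pow, sq_abs]
  have hdi2 : (0:ℝ) < (d i) ^ 2 := by positivity
  have hphGe : -(β * K / (d i) ^ 2) ≤ φ'' (a + hh) := by
    have hpos : (0:ℝ) < s ^ 2 * (d i) ^ 2 := by positivity
    have hexp : (-(β * K / (d i) ^ 2)) * (s ^ 2 * (d i) ^ 2) = -(β * s ^ 2 * K) := by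
      field_simp
    have : (-(β * K / (d i) ^ 2)) * (s ^ 2 * (d i) ^ 2)
        ≤ φ'' (a + hh) * (s ^ 2 * (d i) ^ 2) := by
      rw [hexp, ← hh2]
      exact hkey
    exact le_of_mul_le_mul_right this hpos
  -- compare with Cm
  have hCfeq : Cf (S, i) = β * K / (d i) ^ 2 := by
    rw [hCf, hK, hddef, hu]
  have hCmbound : -Cm ≤ φ'' (a + hh) := by
    have := hCmge (S, i)
    rw [hCfeq] at this
    linarith
  -- but a + hh < δ forces φ''(a + hh) < -(Cm + 1)
  have ha0 : 0 < a := by rw [ha]; exact abs_pos.mpr h0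
  have haδ : a + hh < δ := by
    have h1 : a < δ / 2 := hlt
    have h2 : hh < δ / 2 := by rw [hhdef]; exact hsdi
    linarith
  have hmemIoi : a + hh ∈ Set.Ioi (0:ℝ) := by
    simp only [Set.mem_Ioi]; linarith
  have hdist : dist (a + hh) 0 < δ := by
    rw [Real.dist_eq, sub_zero, abs_of_pos (by linarith : (0:ℝ) < a + hh)]
    exact haδ
  have hcontr := hδ hdist hmemIoi
  linarith
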